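/- arXiv:1202.5619 — 3 statements merged into one kernel-verified Lean document; each statement's English description precedes it below -/
import Mathlib

section
/- For every constant k and every n = sk, there exists a graph G on n vertices with unit edge lengths such that OPT_G ≤ 1, but every infinite walk in G of cost at most 1 has a kernel (shortest finite walk whose repetition equals the walk) of size at least (s+1)^{k−1}. -/
open scoped ENNReal BigOperators
open Finset




/-- Total edge length of the segment of the infinite walk `W` from index `a` to `b`. -/
noncomputable def walkLen {V : Type*} (l : V → V → ℝ≥0∞) (W : ℕ → V) (a b : ℕ) : ℝ≥0∞ :=
  ∑ i ∈ Finset.Ico a b, l (W i) (W (i + 1))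

/-- The walk visits every vertex infinitely often. -/
def VisitsInfOften {V : Type*} (W : ℕ → V) : Prop :=
  ∀ v : V, ∀ N : ℕ, ∃ a : ℕ, N ≤ a ∧ W a = v

/-- Latency of vertex `v` on infinite walk `W`: the supremum, over visits to `v`,
of the length of the sub-walk until the next visit to `v`. -/
noncomputable def latency {V : Type*} (l : V → V → ℝ≥0∞) (W : ℕ → V) (v : V) : ℝ≥0∞ :=
  ⨆ (a : ℕ) (_ : W a = v), ⨅ (b : ℕ) (_ : a < b ∧ W b = v), walkLen l W a b

/-- Cost of an infinite walk: the maximum weighted latency over all vertices. -/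
noncomputable def walkCost {V : Type*} (l : V → V → ℝ≥0∞) (φ : V → ℝ≥0∞) (W : ℕ → V) : ℝ≥0∞ :=
  ⨆ v : V, φ v * latency l W v

/-- Optimal cost over all infinite walks (complete graph) visiting all vertices
infinitely often. -/
noncomputable def OPT {V : Type*} (l : V → V → ℝ≥0∞) (φ : V → ℝ≥0∞) : ℝ≥0∞ :=
  ⨅ (W : ℕ → V) (_ : VisitsInfOften W), walkCost l φ W

/-- Optimal cost over infinite walks respecting the adjacency relation A. -/
noncomputable def OPTg {V : Type*} (A : V → V → Prop) (l : V → V → ℝ≥0∞)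
    (φ : V → ℝ≥0∞) : ℝ≥0∞ :=
  ⨅ (W : ℕ → V) (_ : (∀ i, A (W i) (W (i + 1))) ∧ VisitsInfOften W), walkCost l φ W



namespace EKLB

variable (s k : ℕ)

def blk (t : ℕ) : ℕ := Nat.findGreatest (fun i => t % (s+1)^i = (s+1)^i - 1) (k-1)

def dig (t : ℕ) : ℕ := t / (s+1)^(blk s k t) % (s+1)

def Wfun (t : ℕ) : ℕ :=
  blk s k t * s + (if blk s k t < k-1 then min (dig s k t) (s-1) else t / (s+1)^(k-1) % s)

lemma pow_pred_mod (i : ℕ) : ((s+1)^(i+1) - 1) % (s+1)^i = (s+1)^i - 1 := by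
  have h1 : 1 ≤ (s+1)^i := Nat.one_le_pow _ _ (Nat.succ_pos s)
  have h2 : (s+1)^(i+1) - 1 = ((s+1)^i - 1) + s * (s+1)^i := by
    have : (s+1)^(i+1) = (s+1)^i + s * (s+1)^i := by ring
    omega
  rw [h2, Nat.add_mul_mod_self_right, Nat.mod_eq_of_lt (by omega)]

lemma Pdown {t : ℕ} {i i' : ℕ} (h : i ≤ i') (hP : t % (s+1)^i' = (s+1)^i' - 1) :
    t % (s+1)^i = (s+1)^i - 1 := by
  induction i' with
  | zero => interval_cases i; omega
  | succ n ih =>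
    rcases Nat.lt_or_ge i (n+1) with h' | h'
    · apply ih (by omega)
      have h3 := Nat.mod_mod_of_dvd t (pow_dvd_pow (s+1) (Nat.le_succ n))
      rw [hP, pow_pred_mod] at h3
      exact h3.symm
    · have : i = n+1 := by omega
      subst this; exact hP

lemma blk_le (t : ℕ) : blk s k t ≤ k - 1 := Nat.findGreatest_le _

lemma blk_spec (t : ℕ) : t % (s+1)^(blk s k t) = (s+1)^(blk s k t) - 1 :=
  Nat.findGreatest_spec (P := fun i => t % (s+1)^i = (s+1)^i - 1) (Nat.zero_le _) (by simp [Nat.mod_one])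

lemma blk_not_succ {t : ℕ} (h : blk s k t < k - 1) :
    t % (s+1)^(blk s k t + 1) ≠ (s+1)^(blk s k t + 1) - 1 := by
  intro hP
  have h2 : blk s k t + 1 ≤ Nat.findGreatest (fun i => t % (s+1)^i = (s+1)^i - 1) (k-1) :=
    Nat.le_findGreatest (by omega) hP
  have : blk s k t + 1 ≤ blk s k t := h2
  omega

lemma mod_succ_split (t j : ℕ) :
    t % (s+1)^(j+1) = t % (s+1)^j + (s+1)^j * (t / (s+1)^j % (s+1)) := by
  conv_lhs => rw [pow_succ]
  exact Nat.mod_mul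

lemma dig_lt {t : ℕ} (h : blk s k t < k - 1) : dig s k t < s := by
  have hd : dig s k t < s + 1 := Nat.mod_lt _ (Nat.succ_pos s)
  rcases Nat.lt_or_ge (dig s k t) s with h' | h'
  · exact h'
  have hds : dig s k t = s := by omega
  exfalso
  apply blk_not_succ s k h
  set j := blk s k t with hj
  have h1 : 1 ≤ (s+1)^j := Nat.one_le_pow _ _ (Nat.succ_pos s)
  have hsp := mod_succ_split s t j
  have hbs := blk_spec s k t
  rw [← hj] at hbs
  have hdig : t / (s+1)^j % (s+1) = s := hds
  have hpow : (s+1)^(j+1) = (s+1)^j + s * (s+1)^j := by ring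
  rw [hsp, hbs, hdig, hpow]
  have : (s+1)^j * s = s * (s+1)^j := Nat.mul_comm _ _
  omega

end EKLB

namespace EKLB

/-- per-vertex period -/
def M (s k j : ℕ) : ℕ := if j < k-1 then (s+1)^(j+1) else s*(s+1)^(k-1)

/-- canonical residue of vertex (j,d) -/
def r (s j d : ℕ) : ℕ := d * (s+1)^j + ((s+1)^j - 1)

variable (s k : ℕ)

lemma r_lt_M {j d : ℕ} (hj : j < k) (hd : d < s) : r s j d < M s k j := by
  have h1 : 1 ≤ (s+1)^j := Nat.one_le_pow _ _ (Nat.succ_pos s)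
  have hds : d * (s+1)^j + (s+1)^j ≤ s * (s+1)^j := by
    calc d * (s+1)^j + (s+1)^j = (d+1) * (s+1)^j := by ring
      _ ≤ s * (s+1)^j := Nat.mul_le_mul_right _ (by omega)
  unfold M r
  split_ifs with h
  · have : (s+1)^(j+1) = s*(s+1)^j + (s+1)^j := by ring
    omega
  · have hj1 : j = k-1 := by omega
    subst hj1
    omega

lemma blk_eq_of_mod {j t : ℕ} (hj : j < k - 1)
    (hP : t % (s+1)^j = (s+1)^j - 1)
    (hnP : t % (s+1)^(j+1) ≠ (s+1)^(j+1) - 1) : blk s k t = j := by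
  rw [blk, Nat.findGreatest_eq_iff]
  refine ⟨by omega, fun _ => hP, fun n hn hn' hPn => hnP (Pdown s (by omega) hPn)⟩

lemma Wfun_eq_of_mod {j d t : ℕ} (hj : j < k) (hd : d < s)
    (ht : t % M s k j = r s j d) : Wfun s k t = j*s + d := by
  have h1 : 1 ≤ (s+1)^j := Nat.one_le_pow _ _ (Nat.succ_pos s)
  rcases Nat.lt_or_ge j (k-1) with hjk | hjk
  · -- j < k-1
    rw [M, if_pos hjk] at ht
    have hPj : t % (s+1)^j = (s+1)^j - 1 := by
      have h3 := Nat.mod_mod_of_dvd t (pow_dvd_pow (s+1) (Nat.le_succ j))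
      rw [ht] at h3
      rw [← h3, r]
      have : d * (s+1)^j + ((s+1)^j - 1) = ((s+1)^j - 1) + d * (s+1)^j := by ring
      rw [this, Nat.add_mul_mod_self_right, Nat.mod_eq_of_lt (by omega)]
    have hnP : t % (s+1)^(j+1) ≠ (s+1)^(j+1) - 1 := by
      rw [ht, r]
      have he : (s+1)^(j+1) = s*(s+1)^j + (s+1)^j := by ring
      have hds : d * (s+1)^j + (s+1)^j ≤ s * (s+1)^j := by
        calc d * (s+1)^j + (s+1)^j = (d+1) * (s+1)^j := by ring
          _ ≤ s * (s+1)^j := Nat.mul_le_mul_right _ (by omega)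
      omega
    have hblk : blk s k t = j := blk_eq_of_mod s k hjk hPj hnP
    have hdig : dig s k t = d := by
      have hsp := mod_succ_split s t j
      rw [ht, hPj, r] at hsp
      have : (s+1)^j * (t / (s+1)^j % (s+1)) = (s+1)^j * d := by
        have : d * (s+1)^j = (s+1)^j * d := by ring
        omega
      have := Nat.eq_of_mul_eq_mul_left (show 0 < (s+1)^j by omega) this
      rw [dig, hblk, this]
    rw [Wfun, hblk, hdig, if_pos hjk, min_eq_left (by omega)]
  · -- j = k-1 (since j < k and j ≥ k-1)
    have hj1 : j = k-1 := by omega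
    subst hj1
    rw [M, if_neg (lt_irrefl _)] at ht
    set pow := (s+1)^(k-1) with hpow
    have hPj : t % pow = pow - 1 := by
      have h3 : t % (pow * s) % pow = t % pow := Nat.mod_mod_of_dvd t ⟨s, rfl⟩
      rw [mul_comm pow s, ht, r, ← hpow] at h3
      rw [← h3]
      have : d * pow + (pow - 1) = (pow - 1) + d * pow := by ring
      rw [this, Nat.add_mul_mod_self_right, Nat.mod_eq_of_lt (by omega)]
    have hblk : blk s k t = k-1 := by
      have hge : k-1 ≤ blk s k t :=
        Nat.le_findGreatest le_rfl (by rw [← hpow]; exact hPj)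
      have := blk_le s k t
      omega
    have hQ := Nat.div_add_mod t (s * pow)
    set Q := t / (s * pow) with hQdef
    have hteq : t = pow * (s * Q + d) + (pow - 1) := by
      rw [ht, r, ← hpow] at hQ
      have : s * pow * Q = pow * (s * Q) := by ring
      have h2 : pow * (s*Q+d) = pow * (s*Q) + pow * d := by ring
      have h3 : d * pow = pow * d := by ring
      omega
    have hdiv : t / pow = s * Q + d := by
      rw [hteq, Nat.mul_add_div (by omega)]
      have : (pow - 1) / pow = 0 := Nat.div_eq_of_lt (by omega)
      omega
    have hd2 : t / pow % s = d := by
      rw [hdiv]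
      have : s * Q + d = d + Q * s := by ring
      rw [this, Nat.add_mul_mod_self_right, Nat.mod_eq_of_lt hd]
    rw [Wfun, hblk, if_neg (lt_irrefl _), ← hpow, hd2]

end EKLB

namespace EKLB
variable (s k : ℕ)

lemma decode {a b j d : ℕ} (hs : 1 ≤ s) (hb : b < s) (hd : d < s)
    (h : a * s + b = j * s + d) : a = j ∧ b = d := by
  have h1 : (a * s + b) / s = a := by
    rw [add_comm, Nat.add_mul_div_right _ _ hs, Nat.div_eq_of_lt hb]; omega
  have h2 : (j * s + d) / s = j := by
    rw [add_comm, Nat.add_mul_div_right _ _ hs, Nat.div_eq_of_lt hd]; omega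
  rw [h] at h1
  have : a = j := by omega
  subst this
  exact ⟨rfl, by omega⟩

lemma mod_of_Wfun (hs : 1 ≤ s) {j d t : ℕ} (hj : j < k) (hd : d < s)
    (ht : Wfun s k t = j*s + d) : t % M s k j = r s j d := by
  have h1 : 1 ≤ (s+1)^j := Nat.one_le_pow _ _ (Nat.succ_pos s)
  rw [Wfun] at ht
  split_ifs at ht with hblt
  · -- blk t < k-1
    have hdl := dig_lt s k hblt
    rw [min_eq_left (by omega)] at ht
    obtain ⟨hbj, hdig⟩ := decode s hs (by omega) hd ht
    have hjk : j < k - 1 := hbj ▸ hblt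
    rw [M, if_pos hjk, r]
    have hsp := mod_succ_split s t j
    have hPj := blk_spec s k t
    rw [dig] at hdig
    rw [hbj] at hPj hdig
    rw [hsp, hPj, hdig]
    have : (s+1)^j * d = d * (s+1)^j := by ring
    omega
  · -- blk t = k-1 case
    have hmod : t / (s+1)^(k-1) % s < s := Nat.mod_lt _ (by omega)
    obtain ⟨hbj, hdig⟩ := decode s hs hmod hd ht
    have hble := blk_le s k t
    have hjk1 : j = k - 1 := by omega
    subst hjk1
    rw [M, if_neg (lt_irrefl _), r]
    set pow := (s+1)^(k-1) with hpow
    have hPj : t % pow = pow - 1 := by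
      have := blk_spec s k t
      rwa [hbj, ← hpow] at this
    have hB := Nat.div_add_mod t pow
    set B := t / pow with hBdef
    have hBs := Nat.div_add_mod B s
    have hteq : t = (s * pow) * (B / s) + (d * pow + (pow - 1)) := by
      have : pow * B = pow * (s * (B/s) + B % s) := by rw [hBs]
      rw [hdig] at this
      have h2 : pow * (s * (B/s) + d) = s * pow * (B/s) + d * pow := by ring
      omega
    rw [hteq, Nat.mul_add_mod, Nat.mod_eq_of_lt]
    have hds : d * pow + pow ≤ s * pow := by
      calc d * pow + pow = (d+1) * pow := by ring
        _ ≤ s * pow := Nat.mul_le_mul_right _ (by omega)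
    omega

lemma M_pos (hs : 1 ≤ s) (j : ℕ) : 0 < M s k j := by
  have h1 : 0 < (s+1)^(j+1) := Nat.pow_pos (Nat.succ_pos s)
  have h2 : 0 < (s+1)^(k-1) := Nat.pow_pos (Nat.succ_pos s)
  unfold M; split_ifs <;> positivity

lemma M_le (j : ℕ) (hj : j < k) : M s k j ≤ (s+1)^(j+1) := by
  unfold M; split_ifs with h
  · exact le_rfl
  · have hj1 : j = k-1 := by omega
    subst hj1
    calc s * (s+1)^(k-1) ≤ (s+1) * (s+1)^(k-1) := Nat.mul_le_mul_right _ (by omega)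
      _ = (s+1)^(k-1+1) := by ring

end EKLB

namespace EKLB

lemma period_mul {α : Type*} {W : ℕ → α} {p : ℕ} (hper : ∀ i, W (i + p) = W i) :
    ∀ x m, W (x + m * p) = W x := by
  intro x m
  induction m with
  | zero => simp
  | succ n ih => rw [Nat.succ_mul, ← Nat.add_assoc, hper, ih]

lemma period_mod {α : Type*} {W : ℕ → α} {p : ℕ} (hp : 0 < p) (hper : ∀ i, W (i + p) = W i)
    (x : ℕ) : W x = W (x % p) := by
  conv_lhs => rw [← Nat.mod_add_div x p]
  rw [mul_comm]
  exact period_mul hper _ _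

lemma count_chain {α : Type*} [DecidableEq α] {W : ℕ → α} {p G : ℕ} (hp : 0 < p)
    (hper : ∀ i, W (i + p) = W i) {v : α}
    (hgap : ∀ a, W a = v → ∃ b, a < b ∧ W b = v ∧ b - a ≤ G)
    (hvis : ∃ a, W a = v) :
    p ≤ ((Finset.range p).filter (fun t => W t = v)).card * G := by
  classical
  set c := ((Finset.range p).filter (fun t => W t = v)).card with hc
  by_contra hcon
  push_neg at hcon
  -- build the chain of successive visits
  let f : ℕ → {a : ℕ // W a = v} := fun m =>
    Nat.rec ⟨hvis.choose, hvis.choose_spec⟩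
      (fun _ x => ⟨(hgap x.1 x.2).choose, (hgap x.1 x.2).choose_spec.2.1⟩) m
  have hstep : ∀ m, ((f m).1 < (f (m+1)).1) ∧ ((f (m+1)).1 ≤ (f m).1 + G) := by
    intro m
    refine ⟨?_, ?_⟩
    · exact (hgap (f m).1 (f m).2).choose_spec.1
    · show (hgap (f m).1 (f m).2).choose ≤ (f m).1 + G
      have h1 := (hgap (f m).1 (f m).2).choose_spec.1
      have h2 := (hgap (f m).1 (f m).2).choose_spec.2.2
      omega
  have hmono : StrictMono (fun m => (f m).1) :=
    strictMono_nat_of_lt_succ (fun m => (hstep m).1)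
  have hle : ∀ m, (f m).1 ≤ (f 0).1 + m * G := by
    intro m
    induction m with
    | zero => simp
    | succ n ih => have := (hstep n).2; have : (f (n+1)).1 ≤ (f n).1 + G := this
                   calc (f (n+1)).1 ≤ (f n).1 + G := this
                     _ ≤ (f 0).1 + n * G + G := by omega
                     _ = (f 0).1 + (n+1) * G := by ring
  have key : ∀ m m', m < c+1 → m' < c+1 → m < m' → (f m).1 % p = (f m').1 % p → False := by
    intro m m' hm hm' hlt heq
    have h1 : (f m).1 < (f m').1 := hmono hlt
    have h2 : (f m').1 ≤ (f 0).1 + c * G := le_trans (hle m') (by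
      have : m' * G ≤ c * G := Nat.mul_le_mul_right _ (by omega)
      omega)
    have h3 : (f 0).1 ≤ (f m).1 := by
      have := hmono.le_iff_le.mpr (Nat.zero_le m); exact this
    have h4 : (f m').1 < (f m).1 + p := by omega
    -- same residue, distance < p ⟹ equal
    have e1 := Nat.div_add_mod (f m).1 p
    have e2 := Nat.div_add_mod (f m').1 p
    have heq' : (f m).1 % p = (f m').1 % p := heq
    set q1 := (f m).1 / p
    set q2 := (f m').1 / p
    have hq : q1 < q2 → p * q1 + p ≤ p * q2 := by
      intro h
      have : q1 + 1 ≤ q2 := h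
      calc p * q1 + p = p * (q1 + 1) := by ring
        _ ≤ p * q2 := Nat.mul_le_mul_left _ this
    have hq' : q1 ≥ q2 → p * q2 ≤ p * q1 := fun h => Nat.mul_le_mul_left _ h
    rcases Nat.lt_or_ge q1 q2 with h | h
    · have := hq h; omega
    · have := hq' h; omega
  have hinj : Set.InjOn (fun m => (f m).1 % p) (Finset.range (c+1)) := by
    intro m hm m' hm' heq
    simp only [Finset.coe_range, Set.mem_Iio] at hm hm'
    rcases Nat.lt_trichotomy m m' with h | h | h
    · exact absurd (key m m' hm hm' h heq) not_false
    · exact h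
    · exact absurd (key m' m hm' hm h heq.symm) not_false
  have hmaps : ∀ m ∈ Finset.range (c+1),
      (f m).1 % p ∈ (Finset.range p).filter (fun t => W t = v) := by
    intro m _
    rw [Finset.mem_filter, Finset.mem_range]
    exact ⟨Nat.mod_lt _ hp, by rw [← period_mod hp hper]; exact (f m).2⟩
  have := Finset.card_le_card_of_injOn _ hmaps hinj
  rw [Finset.card_range] at this
  omega

lemma geom_sum_nat (s : ℕ) : ∀ m, s * ∑ j ∈ Finset.range m, (s+1)^j + 1 = (s+1)^m := by
  intro m
  induction m with
  | zero => simp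
  | succ n ih =>
    rw [Finset.sum_range_succ, Nat.mul_add, pow_succ]
    have h1 : (s+1)^n * (s+1) = (s+1)^n * s + (s+1)^n := by ring
    have h2 : s * (s+1)^n = (s+1)^n * s := by ring
    omega

lemma sum_blocks (s : ℕ) (hs : 1 ≤ s) (g : ℕ → ℕ) :
    ∀ m, ∑ t ∈ Finset.range (s*m), g (t/s) = ∑ j ∈ Finset.range m, s * g j := by
  intro m
  induction m with
  | zero => simp
  | succ n ih =>
    have hsm : s * (n+1) = s*n + s := by ring
    rw [hsm, Finset.range_eq_Ico,
      ← Finset.sum_Ico_consecutive (fun t => g (t/s)) (Nat.zero_le (s*n)) (by omega),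
      ← Finset.range_eq_Ico, ih, Finset.sum_range_succ]
    congr 1
    have hconst : ∀ t ∈ Finset.Ico (s*n) (s*n+s), g (t/s) = g n := by
      intro t ht
      rw [Finset.mem_Ico] at ht
      congr 1
      have h1 : s * n ≤ t := ht.1
      have h2 : t < s * (n+1) := by omega
      have hc1 : n * s = s * n := Nat.mul_comm _ _
      have hc2 : (n+1) * s = s * (n+1) := Nat.mul_comm _ _
      exact Nat.div_eq_of_lt_le (by omega) (by omega)
    rw [Finset.sum_congr rfl hconst, Finset.sum_const, Nat.card_Ico, smul_eq_mul]
    congr 1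
    omega

end EKLB

namespace EKLB
variable (s k : ℕ)

lemma Wfun_lt (hs : 1 ≤ s) (hk : 1 ≤ k) (t : ℕ) : Wfun s k t < s * k := by
  have hb := blk_le s k t
  have hinner : (if blk s k t < k-1 then min (dig s k t) (s-1) else t / (s+1)^(k-1) % s) < s := by
    split_ifs with h
    · omega
    · exact Nat.mod_lt _ (by omega)
  rw [Wfun]
  have h1 : blk s k t * s ≤ (k-1) * s := Nat.mul_le_mul_right _ hb
  have h2 : (k-1) * s + s = k * s := by
    have : k - 1 + 1 = k := by omega
    calc (k-1)*s + s = (k-1+1)*s := by ring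
      _ = k * s := by rw [this]
  have : k * s = s * k := Nat.mul_comm _ _
  omega

/-- the walk -/
noncomputable def W0 (hs : 1 ≤ s) (hk : 1 ≤ k) : ℕ → Fin (s*k) :=
  fun t => ⟨Wfun s k t, Wfun_lt s k hs hk t⟩

lemma W0_eq_iff (hs : 1 ≤ s) (hk : 1 ≤ k) {j d t : ℕ} (hj : j < k) (hd : d < s) :
    W0 s k hs hk t = ⟨j*s+d, by
      have h1 : (j+1) * s ≤ k * s := Nat.mul_le_mul_right _ (by omega)
      have h2 : j*s + d < (j+1)*s := by have : (j+1)*s = j*s+s := by ring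
                                        omega
      have : k * s = s * k := Nat.mul_comm _ _
      omega⟩ ↔ t % M s k j = r s j d := by
  constructor
  · intro h
    exact mod_of_Wfun s k hs hj hd (by simpa [W0, Fin.ext_iff] using h)
  · intro h
    simp only [W0, Fin.ext_iff]
    exact Wfun_eq_of_mod s k hj hd h

/-- decomposition of a vertex -/
lemma vertex_decomp (hs : 1 ≤ s) (v : Fin (s*k)) :
    (v : ℕ)/s < k ∧ (v : ℕ) % s < s ∧ (v : ℕ) = ((v : ℕ)/s) * s + (v : ℕ) % s := by
  have hv := v.isLt
  have h1 : (v : ℕ)/s < k := by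
    rw [Nat.div_lt_iff_lt_mul (by omega)]
    have : s * k = k * s := Nat.mul_comm _ _
    omega
  have h2 : (v : ℕ) % s < s := Nat.mod_lt _ (by omega)
  have h3 := Nat.div_add_mod (v : ℕ) s
  have h4 : s * ((v:ℕ)/s) = ((v:ℕ)/s) * s := Nat.mul_comm _ _
  exact ⟨h1, h2, by omega⟩

lemma W0_visits (hs : 1 ≤ s) (hk : 1 ≤ k) : VisitsInfOften (W0 s k hs hk) := by
  intro v N
  obtain ⟨hj, hd, hvd⟩ := vertex_decomp s k hs v
  set j := (v : ℕ)/s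
  set d := (v : ℕ) % s
  have hM := M_pos s k hs j
  refine ⟨r s j d + N * M s k j, ?_, ?_⟩
  · have : N ≤ N * M s k j := Nat.le_mul_of_pos_right _ hM
    omega
  · have hmod : (r s j d + N * M s k j) % M s k j = r s j d := by
      rw [Nat.add_mul_mod_self_right, Nat.mod_eq_of_lt (r_lt_M s k hj hd)]
    have := (W0_eq_iff s k hs hk hj hd (t := r s j d + N * M s k j)).mpr hmod
    rw [this]
    apply Fin.ext
    show j*s + d = (v : ℕ)
    omega

lemma walkLen_one {n : ℕ} (W : ℕ → Fin n) (a b : ℕ) :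
    walkLen (fun _ _ => (1:ℝ≥0∞)) W a b = ((b - a : ℕ) : ℝ≥0∞) := by
  rw [walkLen, Finset.sum_const, Nat.card_Ico, nsmul_eq_mul, mul_one]

end EKLB

namespace EKLB
variable (s k : ℕ)

noncomputable def phi : Fin (s*k) → ℝ≥0∞ :=
  fun v => (((s+1 : ℕ) : ℝ≥0∞))⁻¹ ^ ((v : ℕ)/s + 1)

lemma phi_mul_pow (v : Fin (s*k)) :
    phi s k v * (((s+1)^((v:ℕ)/s + 1) : ℕ) : ℝ≥0∞) = 1 := by
  rw [phi, Nat.cast_pow, ← mul_pow, ENNReal.inv_mul_cancel, one_pow]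
  · exact Nat.cast_ne_zero.mpr (by omega)
  · exact ENNReal.natCast_ne_top _

lemma phi_pos (v : Fin (s*k)) : 0 < phi s k v ∧ phi s k v ≤ 1 := by
  constructor
  · rw [phi]
    exact ENNReal.pow_pos (ENNReal.inv_pos.mpr (ENNReal.natCast_ne_top _)) _
  · rw [phi]
    apply pow_le_one'
    rw [ENNReal.inv_le_one]
    exact_mod_cast Nat.one_le_iff_ne_zero.mpr (by omega)

lemma latency_W0_le (hs : 1 ≤ s) (hk : 1 ≤ k) (v : Fin (s*k)) :
    latency (fun _ _ => (1:ℝ≥0∞)) (W0 s k hs hk) v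
      ≤ (((s+1)^((v:ℕ)/s + 1) : ℕ) : ℝ≥0∞) := by
  apply iSup₂_le
  intro a ha
  obtain ⟨hj, hd, hvd⟩ := vertex_decomp s k hs v
  set j := (v : ℕ)/s with hjdef
  set d := (v : ℕ) % s with hddef
  have hvfin : v = ⟨j*s+d, by omega⟩ := Fin.ext (by show (v:ℕ) = j*s+d; omega)
  have hamod : a % M s k j = r s j d := by
    rw [← W0_eq_iff s k hs hk hj hd, ← hvfin]
    exact ha
  have hbmod : (a + M s k j) % M s k j = r s j d := by
    rw [Nat.add_mod_right]; exact hamod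
  have hb : W0 s k hs hk (a + M s k j) = v := by
    rw [(W0_eq_iff s k hs hk hj hd).mpr hbmod, ← hvfin]
  have hMpos := M_pos s k hs j
  refine le_trans (iInf₂_le (a + M s k j) ⟨by omega, hb⟩) ?_
  rw [walkLen_one]
  have : a + M s k j - a = M s k j := by omega
  rw [this]
  exact_mod_cast Nat.cast_le.mpr (M_le s k j hj)

lemma walkCost_W0 (hs : 1 ≤ s) (hk : 1 ≤ k) :
    walkCost (fun _ _ => (1:ℝ≥0∞)) (phi s k) (W0 s k hs hk) ≤ 1 := by
  apply iSup_le
  intro v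
  calc phi s k v * latency (fun _ _ => (1:ℝ≥0∞)) (W0 s k hs hk) v
      ≤ phi s k v * (((s+1)^((v:ℕ)/s + 1) : ℕ) : ℝ≥0∞) :=
        mul_le_mul_right (latency_W0_le s k hs hk v) _
    _ = 1 := phi_mul_pow s k v

end EKLB

/-- For every k and every n = s·k there is a graph on n vertices with unit edge lengths
such that OPT ≤ 1 but every infinite walk of cost at most 1 has kernel of size at least
(s+1)^(k-1). -/
theorem exponential_kernel_lower_bound (k s : ℕ) (hk : 1 ≤ k) (hs : 1 ≤ s) :
    ∃ (A : Fin (s * k) → Fin (s * k) → Prop) (l : Fin (s * k) → Fin (s * k) → ℝ≥0∞)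
      (φ : Fin (s * k) → ℝ≥0∞),
      (∀ u v, A u v → A v u) ∧ (∀ u v, A u v → l u v = 1) ∧
      (∀ v, 0 < φ v ∧ φ v ≤ 1) ∧
      OPTg A l φ ≤ 1 ∧
      ∀ W : ℕ → Fin (s * k), (∀ i, A (W i) (W (i + 1))) → VisitsInfOften W →
        walkCost l φ W ≤ 1 →
        ∀ p : ℕ, 0 < p → (∀ i, W (i + p) = W i) → (s + 1) ^ (k - 1) ≤ p := by
  classical
  refine ⟨fun _ _ => True, fun _ _ => (1:ℝ≥0∞), EKLB.phi s k,
    fun _ _ _ => trivial, fun _ _ _ => rfl, EKLB.phi_pos s k, ?_, ?_⟩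
  · -- OPTg ≤ 1
    refine le_trans (iInf₂_le (EKLB.W0 s k hs hk)
      ⟨fun _ => trivial, EKLB.W0_visits s k hs hk⟩) ?_
    exact EKLB.walkCost_W0 s k hs hk
  · -- lower bound on period
    intro W _ hVis hcost p hp hper
    set c : Fin (s*k) → ℕ := fun v => ((Finset.range p).filter (fun t => W t = v)).card
      with hcdef
    -- per-vertex gap bound and count bounds
    have hbound : ∀ v : Fin (s*k),
        p ≤ c v * (s+1)^((v:ℕ)/s + 1) ∧ 1 ≤ c v := by
      intro v
      obtain ⟨hj, hd, hvd⟩ := EKLB.vertex_decomp s k hs v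
      set j := (v : ℕ)/s with hjdef
      set G := (s+1)^(j+1) with hGdef
      -- latency bound
      have hφlat : EKLB.phi s k v * latency (fun _ _ => (1:ℝ≥0∞)) W v ≤ 1 :=
        le_trans (le_iSup (fun v => EKLB.phi s k v *
          latency (fun _ _ => (1:ℝ≥0∞)) W v) v) hcost
      have hφG : EKLB.phi s k v * ((G : ℕ) : ℝ≥0∞) = 1 := EKLB.phi_mul_pow s k v
      have hφ0 : EKLB.phi s k v ≠ 0 := (EKLB.phi_pos s k v).1.ne'
      have hφtop : EKLB.phi s k v ≠ ⊤ :=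
        ne_top_of_le_ne_top ENNReal.one_ne_top (EKLB.phi_pos s k v).2
      have hlat : latency (fun _ _ => (1:ℝ≥0∞)) W v ≤ ((G : ℕ) : ℝ≥0∞) := by
        rw [← ENNReal.mul_le_mul_iff_right hφ0 hφtop, hφG]
        exact hφlat
      -- gap property
      have hgap : ∀ a, W a = v → ∃ b, a < b ∧ W b = v ∧ b - a ≤ G := by
        intro a ha
        have h2 : (⨅ (b : ℕ) (_ : a < b ∧ W b = v),
            walkLen (fun _ _ => (1:ℝ≥0∞)) W a b) ≤ ((G : ℕ) : ℝ≥0∞) :=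
          le_trans (le_iSup₂ (f := fun (a : ℕ) (_ : W a = v) =>
            ⨅ (b : ℕ) (_ : a < b ∧ W b = v),
              walkLen (fun _ _ => (1:ℝ≥0∞)) W a b) a ha) hlat
        have h3 : (⨅ (b : ℕ) (_ : a < b ∧ W b = v),
            walkLen (fun _ _ => (1:ℝ≥0∞)) W a b) < (((G+1) : ℕ) : ℝ≥0∞) :=
          lt_of_le_of_lt h2 (by exact_mod_cast Nat.lt_succ_self G)
        rw [iInf_lt_iff] at h3
        obtain ⟨b, h4⟩ := h3
        rw [iInf_lt_iff] at h4
        obtain ⟨hb, h5⟩ := h4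
        rw [EKLB.walkLen_one] at h5
        have h6 : b - a < G + 1 := by exact_mod_cast h5
        exact ⟨b, hb.1, hb.2, by omega⟩
      have hvis : ∃ a, W a = v := by
        obtain ⟨a, _, ha⟩ := hVis v 0
        exact ⟨a, ha⟩
      constructor
      · exact EKLB.count_chain hp hper hgap hvis
      · obtain ⟨a, ha⟩ := hvis
        have hmem : a % p ∈ (Finset.range p).filter (fun t => W t = v) := by
          rw [Finset.mem_filter, Finset.mem_range]
          exact ⟨Nat.mod_lt _ hp, by rw [← EKLB.period_mod hp hper]; exact ha⟩
        exact Finset.card_pos.mpr ⟨_, hmem⟩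
    -- total count
    have hsum : ∑ v : Fin (s*k), c v = p := by
      rw [hcdef]
      have := Finset.card_eq_sum_card_fiberwise
        (f := W) (s := Finset.range p) (t := Finset.univ) (fun x _ => Finset.mem_univ _)
      rw [Finset.card_range] at this
      exact this.symm
    obtain ⟨k', rfl⟩ : ∃ k', k = k' + 1 := ⟨k-1, by omega⟩
    simp only [Nat.add_sub_cancel]
    -- the per-vertex lower bounds
    set g : ℕ → ℕ := fun j => if j < k' then p * (s+1)^(k'-1-j) else (s+1)^k' with hgdef
    have hkey : ∀ v : Fin (s*(k'+1)), g ((v:ℕ)/s) ≤ c v * (s+1)^k' := by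
      intro v
      obtain ⟨hb1, hb2⟩ := hbound v
      obtain ⟨hj, _, _⟩ := EKLB.vertex_decomp s (k'+1) hs v
      set j := (v : ℕ)/s with hjdef
      rw [hgdef]
      dsimp only
      split_ifs with hcase
      · have hexp : (j+1) + (k'-1-j) = k' := by omega
        calc p * (s+1)^(k'-1-j) ≤ (c v * (s+1)^(j+1)) * (s+1)^(k'-1-j) :=
              Nat.mul_le_mul_right _ hb1
          _ = c v * (s+1)^((j+1)+(k'-1-j)) := by rw [pow_add]; ring
          _ = c v * (s+1)^k' := by rw [hexp]
      · calc (s+1)^k' = 1 * (s+1)^k' := (one_mul _).symm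
          _ ≤ c v * (s+1)^k' := Nat.mul_le_mul_right _ hb2
    -- sum up
    have hsum2 : ∑ v : Fin (s*(k'+1)), g ((v:ℕ)/s) ≤ p * (s+1)^k' := by
      calc ∑ v : Fin (s*(k'+1)), g ((v:ℕ)/s)
          ≤ ∑ v : Fin (s*(k'+1)), c v * (s+1)^k' := Finset.sum_le_sum (fun v _ => hkey v)
        _ = (∑ v : Fin (s*(k'+1)), c v) * (s+1)^k' := (Finset.sum_mul _ _ _).symm
        _ = p * (s+1)^k' := by rw [hsum]
    -- compute the left side
    set T := ∑ j ∈ Finset.range k', (s+1)^j with hTdef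
    have hgeom : s * T + 1 = (s+1)^k' := EKLB.geom_sum_nat s k'
    have hlhs : ∑ v : Fin (s*(k'+1)), g ((v:ℕ)/s) = p * (s * T) + s * (s+1)^k' := by
      rw [Fin.sum_univ_eq_sum_range (fun t => g (t/s)) (s*(k'+1)),
        EKLB.sum_blocks s hs g (k'+1), Finset.sum_range_succ]
      have hglast : g k' = (s+1)^k' := by rw [hgdef]; simp
      have hrange : ∀ j ∈ Finset.range k', s * g j = s * (p * (s+1)^(k'-1-j)) := by
        intro j hj
        rw [Finset.mem_range] at hj
        rw [hgdef]
        simp only [if_pos hj]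
      rw [Finset.sum_congr rfl hrange, hglast]
      congr 1
      rw [Finset.sum_range_reflect (fun j => s * (p * (s+1)^j)) k']
      rw [hTdef, Finset.mul_sum, Finset.mul_sum]
      apply Finset.sum_congr rfl
      intro j _
      ring
    rw [hlhs] at hsum2
    -- conclude
    have hp2 : p * (s+1)^k' = p * (s*T) + p := by
      rw [← hgeom]; ring
    rw [hp2] at hsum2
    have h7 : s * (s+1)^k' ≤ p := by omega
    have h8 : (s+1)^k' ≤ s * (s+1)^k' := Nat.le_mul_of_pos_left _ (by omega)
    omega
end

section
/- Let W be a walk of total length L and k a positive integer. Then the vertices of W can be partitioned (preserving order) into k consecutive sub-walks W_1, ..., W_k such that each W_i has length at most L/k. -/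
/-- Length of a finite walk given as a list of vertices: the sum of the lengths of
its consecutive edges. -/
def listLen {V : Type*} (l : V → V → NNReal) (W : List V) : NNReal :=
  ((W.zip W.tail).map (fun q => l q.1 q.2)).sum

lemma listLen_nil {V : Type*} (l : V → V → NNReal) : listLen l ([] : List V) = 0 := by
  simp [listLen]

lemma listLen_single {V : Type*} (l : V → V → NNReal) (a : V) : listLen l [a] = 0 := by
  simp [listLen]

lemma listLen_cons_cons {V : Type*} (l : V → V → NNReal) (a b : V) (t : List V) :
    listLen l (a :: b :: t) = l a b + listLen l (b :: t) := by
  simp [listLen]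

/-- Greedy split: take the maximal nonempty prefix of `a :: W` whose length is ≤ B. -/
noncomputable def goSplit {V : Type*} (l : V → V → NNReal) (B : NNReal) (a : V)
    (W : List V) : List V × List V :=
  match W with
  | [] => ([a], [])
  | b :: rest =>
      if l a b ≤ B then
        (a :: (goSplit l (B - l a b) b rest).1, (goSplit l (B - l a b) b rest).2)
      else ([a], b :: rest)

lemma goSplit_spec {V : Type*} (l : V → V → NNReal) :
    ∀ (W : List V) (B : NNReal) (a : V),
      (∃ t, (goSplit l B a W).1 = a :: t) ∧
      (goSplit l B a W).1 ++ (goSplit l B a W).2 = a :: W ∧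
      listLen l (goSplit l B a W).1 ≤ B ∧
      ((goSplit l B a W).2 ≠ [] →
        B + listLen l (goSplit l B a W).2 ≤ listLen l (a :: W)) := by
  intro W
  induction W with
  | nil =>
      intro B a
      simp [goSplit, listLen_single]
  | cons b rest ih =>
      intro B a
      by_cases h : l a b ≤ B
      · obtain ⟨⟨t, ht⟩, h1, h2, h3⟩ := ih (B - l a b) b
        have hgo : goSplit l B a (b :: rest) =
            (a :: (goSplit l (B - l a b) b rest).1, (goSplit l (B - l a b) b rest).2) := by
          rw [goSplit, if_pos h]
        rw [hgo]
        have hsub : l a b + (B - l a b) = B := by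
          rw [add_comm]; exact tsub_add_cancel_of_le h
        refine ⟨⟨_, rfl⟩, by simp [h1], ?_, ?_⟩
        · rw [ht, listLen_cons_cons]
          rw [ht] at h2
          calc l a b + listLen l (b :: t) ≤ l a b + (B - l a b) := add_le_add (le_refl _) h2
            _ = B := hsub
        · intro hne
          have h3' := h3 hne
          calc B + listLen l (goSplit l (B - l a b) b rest).2
              = l a b + ((B - l a b) + listLen l (goSplit l (B - l a b) b rest).2) := by
                rw [← add_assoc, hsub]
            _ ≤ l a b + listLen l (b :: rest) := add_le_add (le_refl _) h3'
            _ = listLen l (a :: b :: rest) := (listLen_cons_cons l a b rest).symm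
      · have hgo : goSplit l B a (b :: rest) = ([a], b :: rest) := by
          rw [goSplit, if_neg h]
        rw [hgo]
        refine ⟨⟨[], rfl⟩, rfl, by simp [listLen_single], ?_⟩
        intro _
        rw [listLen_cons_cons]
        exact add_le_add (le_of_lt (lt_of_not_ge h)) (le_refl _)

lemma walk_partition_aux {V : Type*} (l : V → V → NNReal) :
    ∀ (k : ℕ), 0 < k → ∀ (W : List V) (B : NNReal), listLen l W ≤ k * B →
      ∃ P : List (List V), P.length = k ∧ P.flatten = W ∧
        ∀ part ∈ P, listLen l part ≤ B := by
  intro k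
  induction k with
  | zero => intro h; omega
  | succ k ih =>
      intro _ W B hW
      rcases Nat.eq_zero_or_pos k with hk0 | hkpos
      · subst hk0
        refine ⟨[W], rfl, by simp, ?_⟩
        intro part hp
        simp at hp
        subst hp
        simpa using hW
      · cases W with
        | nil =>
            refine ⟨List.replicate (k + 1) [], by simp, by simp, ?_⟩
            intro part hp
            have := List.eq_of_mem_replicate hp
            subst this
            simp [listLen_nil]
        | cons a W' =>
            obtain ⟨-, h1, h2, h3⟩ := goSplit_spec l W' B a
            set A := (goSplit l B a W').1 with hA
            set C := (goSplit l B a W').2 with hC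
            by_cases hCe : C = []
            · refine ⟨A :: List.replicate k [], by simp, ?_, ?_⟩
              · simp only [List.flatten_cons]
                rw [← h1, hCe]
                simp
              · intro part hp
                simp at hp
                rcases hp with hp | hp
                · subst hp; exact h2
                · rw [hp.2]; simp [listLen_nil]
            · have hle : B + listLen l C ≤ listLen l (a :: W') := h3 hCe
              have hC' : listLen l C ≤ k * B := by
                have : B + listLen l C ≤ (k + 1 : ℕ) * B := le_trans hle hW
                have h2' : B + listLen l C ≤ B + k * B := by
                  calc B + listLen l C ≤ (k + 1 : ℕ) * B := this
                    _ = B + k * B := by push_cast; ring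
                exact le_of_add_le_add_left h2'
              obtain ⟨P', hP1, hP2, hP3⟩ := ih hkpos C B hC'
              refine ⟨A :: P', by simp [hP1], ?_, ?_⟩
              · simp only [List.flatten_cons, hP2]
                exact h1
              · intro part hp
                rcases List.mem_cons.mp hp with hp | hp
                · subst hp; exact h2
                · exact hP3 part hp

/-- Partition lemma: the vertices of any walk of total length L can be split, in order,
into k consecutive sub-walks each of length at most L/k. -/
theorem walk_partition {V : Type*} (l : V → V → NNReal) (W : List V) (k : ℕ)
    (hk : 0 < k) :
    ∃ P : List (List V), P.length = k ∧ P.flatten = W ∧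
      ∀ part ∈ P, listLen l part ≤ listLen l W / k := by
  apply walk_partition_aux l k hk W (listLen l W / k)
  have hk' : (k : NNReal) ≠ 0 := by
    exact_mod_cast Nat.pos_iff_ne_zero.mp hk
  rw [mul_div_cancel₀ _ hk']
end

section
/- In a metric graph G' with weights that are powers of 1/2 and at least one vertex of weight 1, if W_i is any walk visiting exactly the vertices of weight 1/2^i (each once), then l(W_i) ≤ 2^i · OPT_{G'} whenever W_i is a shortest Hamiltonian path on those vertices. -/
open scoped ENNReal BigOperators

/-- Length of a finite walk given as a list of vertices, using the extended metric. -/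
noncomputable def elistLen {V : Type*} [MetricSpace V] (L : List V) : ℝ≥0∞ :=
  ((L.zip L.tail).map (fun q => edist q.1 q.2)).sum

lemma walkLen_mono {V : Type*} (l : V → V → ℝ≥0∞) (W : ℕ → V) {a b c : ℕ} (h : b ≤ c) :
    walkLen l W a b ≤ walkLen l W a c :=
  Finset.sum_le_sum_of_subset (Finset.Ico_subset_Ico le_rfl h)

lemma walkLen_anti {V : Type*} (l : V → V → ℝ≥0∞) (W : ℕ → V) {a b c : ℕ} (h : a ≤ b) :
    walkLen l W b c ≤ walkLen l W a c :=
  Finset.sum_le_sum_of_subset (Finset.Ico_subset_Ico h le_rfl)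

lemma walkLen_add {V : Type*} (l : V → V → ℝ≥0∞) (W : ℕ → V) {a b c : ℕ}
    (hab : a ≤ b) (hbc : b ≤ c) :
    walkLen l W a b + walkLen l W b c = walkLen l W a c :=
  Finset.sum_Ico_consecutive _ hab hbc

lemma edist_le_walkLen {V : Type*} [MetricSpace V] (W : ℕ → V) {a b : ℕ} (h : a ≤ b) :
    edist (W a) (W b) ≤ walkLen (fun u w => edist u w) W a b := by
  induction b, h using Nat.le_induction with
  | base => simp [walkLen]
  | succ b hab ih =>
    calc edist (W a) (W (b + 1)) ≤ edist (W a) (W b) + edist (W b) (W (b + 1)) :=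
          edist_triangle _ _ _
      _ ≤ walkLen (fun u w => edist u w) W a b + edist (W b) (W (b + 1)) :=
          add_le_add_left ih _
      _ = walkLen (fun u w => edist u w) W a (b + 1) := by
          rw [walkLen, walkLen, Finset.sum_Ico_succ_top hab]

lemma elistLen_le_walk {V : Type*} [MetricSpace V] (W : ℕ → V) (t : V → ℕ) :
    ∀ (rest : List V) (v : V), (v :: rest).Pairwise (fun u w => t u ≤ t w) →
      (∀ w ∈ v :: rest, W (t w) = w) →
      ∃ b : ℕ, t v ≤ b ∧ (∃ w, w ∈ v :: rest ∧ t w = b) ∧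
        elistLen (v :: rest) ≤ walkLen (fun u w => edist u w) W (t v) b := by
  intro rest
  induction rest with
  | nil =>
    intro v _ _
    exact ⟨t v, le_rfl, ⟨v, by simp, rfl⟩, by simp [elistLen]⟩
  | cons w rs ih =>
    intro v hp hwv
    have hvw : t v ≤ t w := (List.pairwise_cons.mp hp).1 w (by simp)
    obtain ⟨b, hwb, ⟨w', hw', hw'b⟩, hlen⟩ := ih w (List.pairwise_cons.mp hp).2
      (fun u hu => hwv u (List.mem_cons_of_mem _ hu))
    refine ⟨b, le_trans hvw hwb, ⟨w', List.mem_cons_of_mem _ hw', hw'b⟩, ?_⟩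
    have h1 : edist v w ≤ walkLen (fun u w => edist u w) W (t v) (t w) := by
      have h2 := edist_le_walkLen W hvw
      rwa [hwv v (by simp), hwv w (by simp)] at h2
    calc elistLen (v :: w :: rs) = edist v w + elistLen (w :: rs) := by simp [elistLen]
      _ ≤ walkLen (fun u w => edist u w) W (t v) (t w)
            + walkLen (fun u w => edist u w) W (t w) b := add_le_add h1 hlen
      _ = walkLen (fun u w => edist u w) W (t v) b := walkLen_add _ _ hvw hwb

lemma exists_next_visit {V : Type*} (l : V → V → ℝ≥0∞) (W : ℕ → V) (hW : VisitsInfOften W)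
    (v : V) (B : ℝ≥0∞) (hlat : latency l W v ≤ B) (s : ℕ) (hs : ∃ a, a ≤ s ∧ W a = v) :
    ∃ b : ℕ, s ≤ b ∧ W b = v ∧ walkLen l W s b ≤ B := by
  classical
  obtain ⟨a0, ha0s, ha0⟩ := hs
  set a := Nat.findGreatest (fun a => W a = v) s with ha
  have hPa : W a = v := by
    have h := Nat.findGreatest_spec (P := fun a => W a = v) ha0s ha0
    simpa [← ha] using h
  have has : a ≤ s := Nat.findGreatest_le s
  have hex : ∃ b, a < b ∧ W b = v := by
    obtain ⟨c, hc, hcv⟩ := hW v (a + 1)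
    exact ⟨c, hc, hcv⟩
  obtain ⟨hab, hbv⟩ := Nat.find_spec hex
  set b := Nat.find hex with hb
  have hsb : s < b := by
    by_contra h
    push_neg at h
    exact Nat.findGreatest_is_greatest hab h hbv
  have hIn : walkLen l W a b ≤ ⨅ (c : ℕ) (_ : a < c ∧ W c = v), walkLen l W a c :=
    le_iInf₂ fun c hc => walkLen_mono l W (Nat.find_min' hex hc)
  rw [latency] at hlat
  have hII : (⨅ (c : ℕ) (_ : a < c ∧ W c = v), walkLen l W a c) ≤ B :=
    le_trans (le_iSup₂ (f := fun (a : ℕ) (_ : W a = v) =>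
      ⨅ (c : ℕ) (_ : a < c ∧ W c = v), walkLen l W a c) a hPa) hlat
  exact ⟨b, le_of_lt hsb, hbv, le_trans (walkLen_anti l W has) (le_trans hIn hII)⟩

/-- In a relaxed metric graph with a weight-1 vertex, a shortest Hamiltonian path on
the vertices of weight 1/2^i has length at most 2^i·OPT. -/
theorem tsp_path_length_bound {V : Type*} [MetricSpace V] [Fintype V]
    (φ : V → ℝ≥0∞) (hpow : ∀ u : V, ∃ x : ℕ, φ u = (1/2 : ℝ≥0∞) ^ x)
    (hone : ∃ u : V, φ u = 1) (i : ℕ) (L : List V) (hnd : L.Nodup)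
    (hmem : ∀ v : V, v ∈ L ↔ φ v = (1/2 : ℝ≥0∞) ^ i)
    (hshort : ∀ L' : List V, L'.Nodup → (∀ v : V, v ∈ L' ↔ φ v = (1/2 : ℝ≥0∞) ^ i) →
      elistLen L ≤ elistLen L') :
    elistLen L ≤ 2 ^ i * OPT (fun a b => edist a b) φ := by
  classical
  have h2 : (2 : ℝ≥0∞) ^ i * (1/2 : ℝ≥0∞) ^ i = 1 := by
    rw [← mul_pow, one_div, ENNReal.mul_inv_cancel (by norm_num) (by norm_num), one_pow]
  have key : ∀ Wk : ℕ → V, VisitsInfOften Wk →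
      elistLen L ≤ 2 ^ i * walkCost (fun a b => edist a b) φ Wk := by
    intro Wk hWk
    set l : V → V → ℝ≥0∞ := fun a b => edist a b with hl
    set C := walkCost l φ Wk with hCdef
    have hlatb : ∀ v ∈ L, latency l Wk v ≤ 2 ^ i * C := by
      intro v hv
      have hφ : φ v = (1/2 : ℝ≥0∞) ^ i := (hmem v).1 hv
      have h1 : φ v * latency l Wk v ≤ C :=
        le_iSup (fun u => φ u * latency l Wk u) v
      calc latency l Wk v = (2 ^ i * (1/2 : ℝ≥0∞) ^ i) * latency l Wk v := by
            rw [h2, one_mul]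
        _ = 2 ^ i * (φ v * latency l Wk v) := by rw [mul_assoc, hφ]
        _ ≤ 2 ^ i * C := mul_le_mul_right h1 _
    have hfs : ∀ v : V, ∃ a, 0 ≤ a ∧ Wk a = v := fun v => hWk v 0
    set f : V → ℕ := fun v => (hfs v).choose with hf
    set s := L.toFinset.sup f with hsdef
    have hnext : ∀ v ∈ L, ∃ b, s ≤ b ∧ Wk b = v ∧ walkLen l Wk s b ≤ 2 ^ i * C := by
      intro v hv
      exact exists_next_visit l Wk hWk v _ (hlatb v hv) s
        ⟨f v, Finset.le_sup (List.mem_toFinset.mpr hv), (hfs v).choose_spec.2⟩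
    set t : V → ℕ := fun v => if h : v ∈ L then (hnext v h).choose else 0 with ht
    have htp : ∀ v ∈ L, s ≤ t v ∧ Wk (t v) = v ∧ walkLen l Wk s (t v) ≤ 2 ^ i * C := by
      intro v hv
      have : t v = (hnext v hv).choose := by simp [ht, dif_pos hv]
      rw [this]
      exact (hnext v hv).choose_spec
    set L' := L.mergeSort (fun u w => decide (t u ≤ t w)) with hL'
    have hperm : List.Perm L' L := List.mergeSort_perm L _
    have hnd' : L'.Nodup := hperm.symm.nodup hnd
    have hmem' : ∀ v : V, v ∈ L' ↔ φ v = (1/2 : ℝ≥0∞) ^ i :=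
      fun v => hperm.mem_iff.trans (hmem v)
    have hLL' : elistLen L ≤ elistLen L' := hshort L' hnd' hmem'
    have hsorted : L'.Pairwise (fun u w => t u ≤ t w) := by
      have hp := List.pairwise_mergeSort (le := fun u w => decide (t u ≤ t w))
        (fun a b c h1 h2 => by
          simp only [decide_eq_true_eq] at h1 h2 ⊢; exact le_trans h1 h2)
        (fun a b => by
          simp only [Bool.or_eq_true, decide_eq_true_eq]; exact Nat.le_total _ _) L
      exact hp.imp (fun h => by simpa using h)
    rcases hL2 : L' with _ | ⟨v, rest⟩
    · rw [hL2] at hLL'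
      simp only [elistLen, List.zip_nil_left, List.map_nil, List.sum_nil] at hLL'
      exact le_trans hLL' (zero_le)
    · have hmemL : ∀ u ∈ v :: rest, u ∈ L := by
        intro u hu
        exact hperm.mem_iff.mp (hL2 ▸ hu)
      obtain ⟨b, hvb, ⟨w, hwmem, hwb⟩, hlen⟩ :=
        elistLen_le_walk Wk t rest v (hL2 ▸ hsorted)
          (fun u hu => (htp u (hmemL u hu)).2.1)
      calc elistLen L ≤ elistLen L' := hLL'
        _ = elistLen (v :: rest) := by rw [hL2]
        _ ≤ walkLen l Wk (t v) b := hlen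
        _ ≤ walkLen l Wk s b := walkLen_anti l Wk (htp v (hmemL v (by simp))).1
        _ = walkLen l Wk s (t w) := by rw [hwb]
        _ ≤ 2 ^ i * C := (htp w (hmemL w hwmem)).2.2
  have hhalf : (1/2 : ℝ≥0∞) ^ i * elistLen L ≤ OPT (fun a b => edist a b) φ := by
    rw [OPT]
    refine le_iInf₂ fun Wk hWk => ?_
    calc (1/2 : ℝ≥0∞) ^ i * elistLen L
        ≤ (1/2 : ℝ≥0∞) ^ i * (2 ^ i * walkCost (fun a b => edist a b) φ Wk) :=
          mul_le_mul_right (key Wk hWk) _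
      _ = walkCost (fun a b => edist a b) φ Wk := by
          rw [← mul_assoc, mul_comm ((1/2 : ℝ≥0∞) ^ i), h2, one_mul]
  calc elistLen L = 2 ^ i * ((1/2 : ℝ≥0∞) ^ i * elistLen L) := by
        rw [← mul_assoc, h2, one_mul]
    _ ≤ 2 ^ i * OPT (fun a b => edist a b) φ := mul_le_mul_right hhalf _
end
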